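/- For odd n ≥ 5, the graph obtained from the complete multipartite graph with parts 3,2,...,2 by adding one edge in the part of size 3 has exactly C(n,2) - 1 dominating sets of size 2: the only non-dominating 2-set is the pair of nonadjacent vertices in the size-3 part. -/

import Mathlib

def partIdx (n : ℕ) (v : Fin n) : ℕ :=
  if v.val < 3 then 0 else (v.val - 1) / 2

def multipartitePlusEdge (n : ℕ) : SimpleGraph (Fin n) :=
  SimpleGraph.fromRel (fun v w => partIdx n v ≠ partIdx n w ∨ (v.val = 0 ∧ w.val = 1))

lemma adj_iff (n : ℕ) (v w : Fin n) :
    (multipartitePlusEdge n).Adj v w ↔ v ≠ w ∧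
      (partIdx n v ≠ partIdx n w ∨ (v.val = 0 ∧ w.val = 1) ∨ (w.val = 0 ∧ v.val = 1)) := by
  simp only [multipartitePlusEdge, SimpleGraph.fromRel_adj]
  constructor
  · rintro ⟨h, h2⟩; exact ⟨h, by tauto⟩
  · rintro ⟨h, h2⟩; exact ⟨h, by tauto⟩

lemma partIdx_lt3 (n : ℕ) (v w : Fin n) (h : partIdx n v = partIdx n w) :
    (v.val < 3 ↔ w.val < 3) := by
  unfold partIdx at h; split_ifs at h <;> omega

lemma dom_iff (n : ℕ) (hn : 5 ≤ n) (S : Finset (Fin n)) (hS : S.card = 2) :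
    (∀ w ∉ S, ∃ u ∈ S, (multipartitePlusEdge n).Adj w u) ↔
      S ≠ {⟨0, by omega⟩, ⟨1, by omega⟩} := by
  constructor
  · intro hdom hEq
    rw [hEq] at hdom
    have h2 : (⟨2, by omega⟩ : Fin n) ∉ ({⟨0, by omega⟩, ⟨1, by omega⟩} : Finset (Fin n)) := by
      simp [Fin.ext_iff]
    obtain ⟨u, hu, hadj⟩ := hdom _ h2
    rw [adj_iff] at hadj
    simp only [Finset.mem_insert, Finset.mem_singleton] at hu
    rcases hu with rfl | rfl <;>
      simp [partIdx, Fin.ext_iff] at hadj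
  · intro hne w hw
    obtain ⟨a, b, hab, rfl⟩ := Finset.card_eq_two.mp hS
    have hwa : w ≠ a := fun h => hw (by simp [h])
    have hwb : w ≠ b := fun h => hw (by simp [h])
    by_cases hpa : partIdx n w ≠ partIdx n a
    · exact ⟨a, by simp, (adj_iff n w a).mpr ⟨hwa, Or.inl hpa⟩⟩
    by_cases hpb : partIdx n w ≠ partIdx n b
    · exact ⟨b, by simp, (adj_iff n w b).mpr ⟨hwb, Or.inl hpb⟩⟩
    push_neg at hpa hpb
    -- all three in the same part
    have hva : w.val ≠ a.val := fun h => hwa (Fin.ext h)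
    have hvb : w.val ≠ b.val := fun h => hwb (Fin.ext h)
    have hvab : a.val ≠ b.val := fun h => hab (Fin.ext h)
    have hlt : w.val < 3 := by
      by_contra h
      have ha3 : ¬ a.val < 3 := fun h' => h ((partIdx_lt3 n w a hpa).mpr h')
      have hb3 : ¬ b.val < 3 := fun h' => h ((partIdx_lt3 n w b hpb).mpr h')
      unfold partIdx at hpa hpb
      rw [if_neg h, if_neg ha3] at hpa
      rw [if_neg h, if_neg hb3] at hpb
      omega
    have ha3 : a.val < 3 := (partIdx_lt3 n w a hpa).mp hlt
    have hb3 : b.val < 3 := (partIdx_lt3 n w b hpb).mp hlt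
    -- vals are {0,1,2}
    rcases (show w.val = 0 ∨ w.val = 1 ∨ w.val = 2 by omega) with hw0 | hw1 | hw2
    · -- w = 0; one of a,b has val 1
      rcases (show a.val = 1 ∨ b.val = 1 by omega) with h1 | h1
      · exact ⟨a, by simp, (adj_iff n w a).mpr ⟨hwa, Or.inr (Or.inl ⟨hw0, h1⟩)⟩⟩
      · exact ⟨b, by simp, (adj_iff n w b).mpr ⟨hwb, Or.inr (Or.inl ⟨hw0, h1⟩)⟩⟩
    · rcases (show a.val = 0 ∨ b.val = 0 by omega) with h1 | h1
      · exact ⟨a, by simp, (adj_iff n w a).mpr ⟨hwa, Or.inr (Or.inr ⟨h1, hw1⟩)⟩⟩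
      · exact ⟨b, by simp, (adj_iff n w b).mpr ⟨hwb, Or.inr (Or.inr ⟨h1, hw1⟩)⟩⟩
    · -- w = 2, so {a,b} = {0,1}: contradiction
      exfalso
      apply hne
      rcases (show (a.val = 0 ∧ b.val = 1) ∨ (a.val = 1 ∧ b.val = 0) by omega) with ⟨h1, h2⟩ | ⟨h1, h2⟩
      · have ha : a = (⟨0, by omega⟩ : Fin n) := Fin.ext h1
        have hb : b = (⟨1, by omega⟩ : Fin n) := Fin.ext h2
        rw [ha, hb]
      · have ha : a = (⟨1, by omega⟩ : Fin n) := Fin.ext h1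
        have hb : b = (⟨0, by omega⟩ : Fin n) := Fin.ext h2
        rw [ha, hb, Finset.pair_comm]

/-- For odd `n ≥ 5`, the graph `K_{3,2,…,2}` plus one edge inside the size-3 part has
exactly `C(n,2) - 1` dominating sets of size 2: there is exactly one 2-set of vertices
inside the size-3 part that fails to dominate (namely the pair whose two vertices do not
dominate the remaining vertex of that part). -/
theorem stmt11 (n : ℕ) (hn : 5 ≤ n) (hodd : Odd n) :
    {S : Finset (Fin n) | S.card = 2 ∧
        ∀ w ∉ S, ∃ u ∈ S, (multipartitePlusEdge n).Adj w u}.ncard = n.choose 2 - 1 ∧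
    (∃! S : Finset (Fin n), S.card = 2 ∧
        ¬ ∀ w ∉ S, ∃ u ∈ S, (multipartitePlusEdge n).Adj w u) ∧
    (∀ S : Finset (Fin n), S.card = 2 →
      (¬ ∀ w ∉ S, ∃ u ∈ S, (multipartitePlusEdge n).Adj w u) →
        ∀ v ∈ S, partIdx n v = 0) := by
  set p01 : Finset (Fin n) := {⟨0, by omega⟩, ⟨1, by omega⟩} with hp01
  have hcard01 : p01.card = 2 := by
    rw [hp01, Finset.card_insert_of_notMem (by simp [Fin.ext_iff]), Finset.card_singleton]
  refine ⟨?_, ⟨p01, ⟨hcard01, ?_⟩, ?_⟩, ?_⟩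
  · have hset : {S : Finset (Fin n) | S.card = 2 ∧
        ∀ w ∉ S, ∃ u ∈ S, (multipartitePlusEdge n).Adj w u} =
        ↑((Finset.univ.powersetCard 2).erase p01) := by
      ext S
      simp only [Set.mem_setOf_eq, Finset.coe_erase, Set.mem_diff, Finset.mem_coe,
        Finset.mem_powersetCard, Set.mem_singleton_iff]
      constructor
      · rintro ⟨hc, hd⟩
        exact ⟨⟨Finset.subset_univ S, hc⟩, (dom_iff n hn S hc).mp hd⟩
      · rintro ⟨⟨-, hc⟩, hne⟩
        exact ⟨hc, (dom_iff n hn S hc).mpr hne⟩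
    rw [hset, Set.ncard_coe_finset,
      Finset.card_erase_of_mem (by simp [Finset.mem_powersetCard, hcard01]),
      Finset.card_powersetCard, Finset.card_univ, Fintype.card_fin]
  · rw [not_iff_not.mpr (dom_iff n hn p01 hcard01)]
    simp [hp01]
  · rintro S ⟨hc, hnd⟩
    rw [not_iff_not.mpr (dom_iff n hn S hc)] at hnd
    exact not_not.mp hnd
  · intro S hc hnd v hv
    rw [not_iff_not.mpr (dom_iff n hn S hc)] at hnd
    push_neg at hnd
    rw [hnd] at hv
    simp only [hp01, Finset.mem_insert, Finset.mem_singleton] at hv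
    rcases hv with rfl | rfl <;> simp [partIdx]
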